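/- Let n ≥ k ≥ 3, k' ≥ 1 with k − k' ≥ 2, and let T be a tree of order n. Then Sd_k(T) ≤ (k / (k − k')) · Sd_{k−k'}(T). Moreover, equality holds if T is a starlike tree with at least k pendant paths all of the maximum length. -/

import Mathlib

open SimpleGraph

/-- The Steiner distance of a vertex set `S` in `G`: the minimum number of edges of a
connected subgraph of `G` whose vertex set contains `S`. -/
noncomputable def steinerDist {V : Type*} (G : SimpleGraph V) (S : Finset V) : ℕ :=
  sInf {n | ∃ H : G.Subgraph, H.Connected ∧ ↑S ⊆ H.verts ∧ H.edgeSet.ncard = n}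

/-- The Steiner `k`-diameter of `G`: the maximum Steiner distance over `k`-subsets. -/
noncomputable def steinerDiam {V : Type*} [Fintype V] [DecidableEq V]
    (G : SimpleGraph V) (k : ℕ) : ℕ :=
  Finset.sup (Finset.univ.filter fun S : Finset V => S.card = k) (steinerDist G)

/-- The Steiner `(k,k')`-eccentricity of a `k'`-subset `S'`. -/
noncomputable def steinerEcc {V : Type*} [Fintype V] [DecidableEq V]
    (G : SimpleGraph V) (k : ℕ) (S' : Finset V) : ℕ :=
  Finset.sup (Finset.univ.filter fun S : Finset V => S.card = k ∧ S' ⊆ S) (steinerDist G)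

/-- The Steiner `(k,k')`-radius of `G`. -/
noncomputable def steinerRadius {V : Type*} [Fintype V] [DecidableEq V]
    (G : SimpleGraph V) (k k' : ℕ) : ℕ :=
  sInf {n | ∃ S' : Finset V, S'.card = k' ∧ steinerEcc G k S' = n}

/-- The diameter of `G`: the maximum distance between two vertices. -/
noncomputable def gDiam {V : Type*} [Fintype V] (G : SimpleGraph V) : ℕ :=
  Finset.sup Finset.univ (fun p : V × V => G.dist p.1 p.2)

/-- The number of pendant vertices (leaves) of `G`. -/
noncomputable def leafCount {V : Type*} [Fintype V] [DecidableEq V]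
    (G : SimpleGraph V) [DecidableRel G.Adj] : ℕ :=
  (Finset.univ.filter fun v => G.degree v = 1).card

namespace StmtAux

open Finset

variable {V : Type*} [DecidableEq V] {G : SimpleGraph V}

/-- The canonical geodesic path between two vertices of a connected graph. -/
noncomputable def pW (hc : G.Connected) (u v : V) : G.Walk u v :=
  (Classical.choose ((hc u v).exists_walk_length_eq_dist)).bypass

lemma pW_isPath (hc : G.Connected) (u v : V) : (pW hc u v).IsPath :=
  Walk.bypass_isPath _

lemma pW_length (hc : G.Connected) (u v : V) : (pW hc u v).length = G.dist u v := by
  have h1 := Classical.choose_spec ((hc u v).exists_walk_length_eq_dist)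
  have h2 := Walk.length_bypass_le (Classical.choose ((hc u v).exists_walk_length_eq_dist))
  have h3 := SimpleGraph.dist_le (pW hc u v)
  unfold pW at h3 ⊢
  omega

variable (hT : G.IsTree)

lemma path_eq (W : G.Walk u v) (hW : W.IsPath) : W = pW hT.isConnected u v := by
  have := hT.IsAcyclic.path_unique ⟨W, hW⟩ ⟨pW hT.isConnected u v, pW_isPath _ _ _⟩
  exact congrArg Subtype.val this

lemma pW_nil (u : V) : pW hT.isConnected u u = Walk.nil := by
  exact (path_eq hT Walk.nil Walk.IsPath.nil).symm

lemma pW_reverse (u v : V) :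
    pW hT.isConnected v u = (pW hT.isConnected u v).reverse :=
  (path_eq hT _ ((pW_isPath hT.isConnected u v).reverse)).symm

lemma mem_edges_symm {e : Sym2 V} (u v : V) :
    e ∈ (pW hT.isConnected v u).edges ↔ e ∈ (pW hT.isConnected u v).edges := by
  rw [pW_reverse hT, Walk.edges_reverse, List.mem_reverse]

/-- splitting the path at an interior vertex -/
lemma pW_split {u v c : V} (h : c ∈ (pW hT.isConnected u v).support) :
    pW hT.isConnected u v =
      (pW hT.isConnected u c).append (pW hT.isConnected c v) := by
  have hp := pW_isPath hT.isConnected u v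
  have h1 : (pW hT.isConnected u v).takeUntil c h = pW hT.isConnected u c :=
    path_eq hT _ (hp.takeUntil h)
  have h2 : (pW hT.isConnected u v).dropUntil c h = pW hT.isConnected c v :=
    path_eq hT _ (hp.dropUntil h)
  rw [← h1, ← h2, Walk.take_spec]

lemma dist_split {u v c : V} (h : c ∈ (pW hT.isConnected u v).support) :
    G.dist u v = G.dist u c + G.dist c v := by
  have := congrArg Walk.length (pW_split hT h)
  rwa [Walk.length_append, pW_length, pW_length, pW_length] at this

lemma edges_triangle {e : Sym2 V} {u v : V} (c : V)
    (he : e ∈ (pW hT.isConnected u v).edges) :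
    e ∈ (pW hT.isConnected u c).edges ∨ e ∈ (pW hT.isConnected c v).edges := by
  have hsub : (pW hT.isConnected u v).edges ⊆
      ((pW hT.isConnected u c).append (pW hT.isConnected c v)).edges := by
    have : (pW hT.isConnected u v) =
        ((pW hT.isConnected u c).append (pW hT.isConnected c v)).bypass :=
      (path_eq hT ((pW hT.isConnected u c).append (pW hT.isConnected c v)).bypass
        (Walk.bypass_isPath _)).symm
    rw [this]
    exact Walk.edges_bypass_subset _
  have := hsub he
  rw [Walk.edges_append, List.mem_append] at this
  exact this

-- Lemma C
lemma edges_pW_subset {H : G.Subgraph} (hH : H.Connected)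
    {x y : V} (hx : x ∈ H.verts) (hy : y ∈ H.verts) :
    ∀ e ∈ (pW hT.isConnected x y).edges, e ∈ H.edgeSet := by
  obtain ⟨W⟩ := hH ⟨x, hx⟩ ⟨y, hy⟩
  have hmap : ∀ e ∈ (W.map H.hom).edges, e ∈ H.edgeSet := by
    intro e he
    rw [Walk.edges_map, List.mem_map] at he
    obtain ⟨e', he', rfl⟩ := he
    induction e' with
    | _ a b =>
      have : H.coe.Adj a b := W.adj_of_mem_edges he'
      exact Subgraph.mem_edgeSet.2 (by simpa using this)
  have hbp : pW hT.isConnected x y = (W.map H.hom).bypass :=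
    (path_eq hT _ (Walk.bypass_isPath _)).symm
  intro e he
  rw [hbp] at he
  exact hmap e (Walk.edges_bypass_subset _ he)

/-- union over `u ∈ S` of the edges of the path from `c` to `u` -/
noncomputable def U0F (hc : G.Connected) (c : V) (S : Finset V) : Finset (Sym2 V) :=
  S.biUnion fun u => (pW hc c u).edges.toFinset

/-- union of edges of all paths between pairs of `S` -/
noncomputable def UF (hc : G.Connected) (S : Finset V) : Finset (Sym2 V) :=
  S.biUnion fun a => S.biUnion fun b => (pW hc a b).edges.toFinset

lemma mem_UF {hc : G.Connected} {S : Finset V} {e : Sym2 V} :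
    e ∈ UF hc S ↔ ∃ a ∈ S, ∃ b ∈ S, e ∈ (pW hc a b).edges := by
  simp [UF]

lemma mem_U0F {hc : G.Connected} {c : V} {S : Finset V} {e : Sym2 V} :
    e ∈ U0F hc c S ↔ ∃ u ∈ S, e ∈ (pW hc c u).edges := by
  simp [U0F]

lemma exists_witness (c : V) {S : Finset V} (hS : S.Nonempty) :
    ∃ H : G.Subgraph, H.Connected ∧ ↑S ⊆ H.verts ∧ c ∈ H.verts ∧
      H.edgeSet = ↑(U0F hT.isConnected c S) := by
  induction S using Finset.cons_induction with
  | empty => exact absurd hS (by simp)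
  | cons a S ha ih =>
    rcases S.eq_empty_or_nonempty with rfl | hS'
    · refine ⟨(pW hT.isConnected c a).toSubgraph, Walk.toSubgraph_connected _, ?_, ?_, ?_⟩
      · intro x hx
        simp only [coe_cons, coe_empty, Set.mem_insert_iff] at hx
        rcases hx with rfl | h
        · exact Walk.end_mem_verts_toSubgraph _
        · simp at h
      · exact Walk.start_mem_verts_toSubgraph _
      · rw [Walk.edgeSet_toSubgraph]
        ext e
        simp [mem_U0F]
    · obtain ⟨H, hconn, hverts, hcH, hedge⟩ := ih hS'
      refine ⟨(pW hT.isConnected c a).toSubgraph ⊔ H, ?_, ?_, ?_, ?_⟩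
      · refine Subgraph.connected_sup (Walk.toSubgraph_connected _).preconnected hconn.preconnected ⟨c, ?_⟩
        exact ⟨Walk.start_mem_verts_toSubgraph _, hcH⟩
      · intro x hx
        simp only [coe_cons, Set.mem_insert_iff] at hx
        rw [Subgraph.verts_sup]
        rcases hx with rfl | h
        · exact Or.inl (Walk.end_mem_verts_toSubgraph _)
        · exact Or.inr (hverts h)
      · rw [Subgraph.verts_sup]; exact Or.inr hcH
      · rw [Subgraph.edgeSet_sup, hedge, Walk.edgeSet_toSubgraph]
        ext e
        simp [mem_U0F, Finset.mem_cons]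

variable [Fintype V]

lemma card_UF_le_sd {S : Finset V} (hS : S.Nonempty) :
    (UF hT.isConnected S).card ≤ steinerDist G S := by
  obtain ⟨H₀, h1, h2, _, h4⟩ := exists_witness hT hS.choose hS
  refine le_csInf ⟨(U0F hT.isConnected hS.choose S).card, H₀, h1, h2, by
    rw [h4, Set.ncard_coe_finset]⟩ ?_
  rintro n ⟨H, hconn, hsub, rfl⟩
  have hU : (↑(UF hT.isConnected S) : Set (Sym2 V)) ⊆ H.edgeSet := by
    intro e he
    rw [Finset.mem_coe, mem_UF] at he
    obtain ⟨a, haS, b, hbS, he⟩ := he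
    exact edges_pW_subset hT hconn (hsub haS) (hsub hbS) e he
  calc (UF hT.isConnected S).card = (↑(UF hT.isConnected S) : Set (Sym2 V)).ncard :=
        (Set.ncard_coe_finset _).symm
    _ ≤ H.edgeSet.ncard := Set.ncard_le_ncard hU (Set.toFinite _)

lemma sd_le_card_U0F (c : V) {S : Finset V} (hS : S.Nonempty) :
    steinerDist G S ≤ (U0F hT.isConnected c S).card := by
  obtain ⟨H₀, h1, h2, _, h4⟩ := exists_witness hT c hS
  exact Nat.sInf_le ⟨H₀, h1, h2, by rw [h4, Set.ncard_coe_finset]⟩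

lemma UF_subset_U0F (c : V) (S : Finset V) :
    UF hT.isConnected S ⊆ U0F hT.isConnected c S := by
  intro e he
  rw [mem_UF] at he
  obtain ⟨a, haS, b, hbS, he⟩ := he
  rcases edges_triangle hT c he with h | h
  · exact mem_U0F.2 ⟨a, haS, (mem_edges_symm hT _ _).2 h⟩
  · exact mem_U0F.2 ⟨b, hbS, h⟩

lemma U0F_subset_UF {c : V} {S : Finset V} (hc : c ∈ S) :
    U0F hT.isConnected c S ⊆ UF hT.isConnected S := by
  intro e he
  rw [mem_U0F] at he
  obtain ⟨u, huS, he⟩ := he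
  exact mem_UF.2 ⟨c, hc, u, huS, he⟩

lemma sd_eq_card_UF {S : Finset V} (hS : S.Nonempty) :
    steinerDist G S = (UF hT.isConnected S).card := by
  obtain ⟨a₀, ha₀⟩ := hS
  have h1 : UF hT.isConnected S = U0F hT.isConnected a₀ S :=
    Finset.Subset.antisymm (UF_subset_U0F hT a₀ S) (U0F_subset_UF hT ha₀)
  refine le_antisymm ?_ (card_UF_le_sd hT ⟨a₀, ha₀⟩)
  rw [h1]
  exact sd_le_card_U0F hT a₀ ⟨a₀, ha₀⟩

lemma UF_mono {S T : Finset V} (h : S ⊆ T) : UF hT.isConnected S ⊆ UF hT.isConnected T := by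
  intro e he
  rw [mem_UF] at he ⊢
  obtain ⟨a, ha, b, hb, he⟩ := he
  exact ⟨a, h ha, b, h hb, he⟩

include hT

lemma step_exists {S : Finset V} (h3 : 3 ≤ S.card) :
    ∃ v ∈ S, (S.card - 1) * steinerDist G S ≤ S.card * steinerDist G (S.erase v) := by
  classical
  set p := S.card with hp
  set d := (UF hT.isConnected S).card with hd
  set E : V → Finset (Sym2 V) := fun v => UF hT.isConnected S \ UF hT.isConnected (S.erase v)
    with hE
  have hEsub : ∀ v, UF hT.isConnected (S.erase v) ⊆ UF hT.isConnected S :=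
    fun v => UF_mono hT (S.erase_subset v)
  -- pairwise disjoint
  have hdisj : ∀ v ∈ S, ∀ w ∈ S, v ≠ w → Disjoint (E v) (E w) := by
    intro v hv w hw hvw
    rw [Finset.disjoint_left]
    intro e hev hew
    simp only [hE, Finset.mem_sdiff] at hev hew
    obtain ⟨heS, henv⟩ := hev
    obtain ⟨-, henw⟩ := hew
    obtain ⟨a, ha, b, hb, he⟩ := mem_UF.1 heS
    have hab : a ≠ b := by
      rintro rfl
      rw [pW_nil hT] at he
      simp at he
    have hva : a = v ∨ b = v := by
      by_contra hcon
      push_neg at hcon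
      exact henv (mem_UF.2 ⟨a, Finset.mem_erase.2 ⟨hcon.1, ha⟩, b,
        Finset.mem_erase.2 ⟨hcon.2, hb⟩, he⟩)
    have hwa : a = w ∨ b = w := by
      by_contra hcon
      push_neg at hcon
      exact henw (mem_UF.2 ⟨a, Finset.mem_erase.2 ⟨hcon.1, ha⟩, b,
        Finset.mem_erase.2 ⟨hcon.2, hb⟩, he⟩)
    have hevw : e ∈ (pW hT.isConnected v w).edges := by
      rcases hva with rfl | rfl
      · rcases hwa with rfl | rfl
        · exact absurd rfl hvw
        · exact he
      · rcases hwa with rfl | rfl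
        · exact (mem_edges_symm hT _ _).1 he
        · exact absurd rfl hvw
    -- pick a third vertex
    have hu : (S \ {v, w}).Nonempty := by
      rw [← Finset.card_pos]
      have h1 : S.card - ({v, w} : Finset V).card ≤ (S \ {v, w}).card :=
        Finset.le_card_sdiff _ _
      have h2 : ({v, w} : Finset V).card ≤ 2 := Finset.card_le_two
      omega
    obtain ⟨u₀, hu₀⟩ := hu
    rw [Finset.mem_sdiff] at hu₀
    obtain ⟨hu₀S, hu₀vw⟩ := hu₀
    simp only [Finset.mem_insert, Finset.mem_singleton, not_or] at hu₀vw
    rcases edges_triangle hT u₀ hevw with h | h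
    · exact henw (mem_UF.2 ⟨v, Finset.mem_erase.2 ⟨hvw, hv⟩, u₀,
        Finset.mem_erase.2 ⟨hu₀vw.2, hu₀S⟩, h⟩)
    · exact henv (mem_UF.2 ⟨u₀, Finset.mem_erase.2 ⟨hu₀vw.1, hu₀S⟩, w,
        Finset.mem_erase.2 ⟨Ne.symm hvw, hw⟩, h⟩)
  -- sum of card E v ≤ d
  have hsum : ∑ v ∈ S, (E v).card ≤ d := by
    rw [← Finset.card_biUnion hdisj]
    apply Finset.card_le_card
    intro e he
    rw [Finset.mem_biUnion] at he
    obtain ⟨v, -, he⟩ := he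
    exact (Finset.mem_sdiff.1 he).1
  have hcardE : ∀ v, (E v).card = d - (UF hT.isConnected (S.erase v)).card := by
    intro v
    rw [hE]
    exact Finset.card_sdiff_of_subset (hEsub v)
  have hle : ∀ v, (UF hT.isConnected (S.erase v)).card ≤ d :=
    fun v => Finset.card_le_card (hEsub v)
  -- ∑ dv ≥ (p-1) * d
  have hsum2 : (p - 1) * d ≤ ∑ v ∈ S, (UF hT.isConnected (S.erase v)).card := by
    have h1 : ∑ v ∈ S, ((E v).card + (UF hT.isConnected (S.erase v)).card) = p * d := by
      rw [hp]
      exact Finset.sum_const_nat (fun v _ => by have := hle v; rw [hcardE v]; omega)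
    rw [Finset.sum_add_distrib] at h1
    have h2 : (p - 1) * d + d = p * d := by
      have : p - 1 + 1 = p := by omega
      calc (p - 1) * d + d = (p - 1 + 1) * d := by ring
        _ = p * d := by rw [this]
    omega
  have key : ∃ v ∈ S, (p - 1) * d ≤ p * (UF hT.isConnected (S.erase v)).card := by
    apply Finset.exists_le_of_sum_le (Finset.card_pos.1 (by omega))
    rw [Finset.sum_const, ← Finset.mul_sum, smul_eq_mul, ← hp]
    calc p * ((p - 1) * d) = (p - 1) * d * p := by ring
      _ ≤ _ := by
        rw [mul_comm ((p-1)*d) p]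
        exact Nat.mul_le_mul_left p hsum2
  obtain ⟨v, hv, hkey⟩ := key
  refine ⟨v, hv, ?_⟩
  have hne : (S.erase v).Nonempty := by
    rw [← Finset.card_pos, Finset.card_erase_of_mem hv]
    omega
  rw [sd_eq_card_UF hT (Finset.card_pos.1 (by omega)), sd_eq_card_UF hT hne]
  exact hkey

lemma diam_step {p : ℕ} (h3 : 3 ≤ p) (hpn : p ≤ Fintype.card V) :
    (p - 1) * steinerDiam G p ≤ p * steinerDiam G (p - 1) := by
  classical
  obtain ⟨S₀, -, hS₀⟩ := Finset.exists_subset_card_eq (s := (Finset.univ : Finset V)) (n := p)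
    (by simpa using hpn)
  have hne : (Finset.univ.filter fun S : Finset V => S.card = p).Nonempty :=
    ⟨S₀, by simp [hS₀]⟩
  obtain ⟨S, hSmem, hSsup⟩ := Finset.exists_mem_eq_sup _ hne (steinerDist G)
  have hScard : S.card = p := (Finset.mem_filter.1 hSmem).2
  obtain ⟨v, hv, hkey⟩ := step_exists hT (hScard ▸ h3)
  rw [steinerDiam, hSsup]
  rw [hScard] at hkey
  refine le_trans hkey (Nat.mul_le_mul_left p ?_)
  apply Finset.le_sup
  simp [Finset.card_erase_of_mem hv, hScard]

lemma telescope {k : ℕ} (hkn : k ≤ Fintype.card V) :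
    ∀ t, 2 ≤ k - t → (k - t) * steinerDiam G k ≤ k * steinerDiam G (k - t) := by
  intro t
  induction t with
  | zero => intro _; simp [Nat.mul_comm]
  | succ t ih =>
    intro h2
    have ht : t + 1 ≤ k := by omega
    set m := k - (t + 1) with hm
    have hkt : k - t = m + 1 := by omega
    have ih' := ih (by omega)
    rw [hkt] at ih'
    have hstep : m * steinerDiam G (m + 1) ≤ (m + 1) * steinerDiam G m := by
      have := diam_step (G := G) hT (p := m + 1) (by omega) (by omega)
      simpa using this
    have h1 : (m + 1) * (m * steinerDiam G k) ≤ (m + 1) * (k * steinerDiam G m) := by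
      calc (m + 1) * (m * steinerDiam G k) = m * ((m + 1) * steinerDiam G k) := by ring
        _ ≤ m * (k * steinerDiam G (m + 1)) := Nat.mul_le_mul_left m ih'
        _ = k * (m * steinerDiam G (m + 1)) := by ring
        _ ≤ k * ((m + 1) * steinerDiam G m) := Nat.mul_le_mul_left k hstep
        _ = (m + 1) * (k * steinerDiam G m) := by ring
    exact Nat.le_of_mul_le_mul_left h1 (by omega)

omit hT

variable [DecidableRel G.Adj]

/-- in a path whose internal vertices have degree ≤ 2 and whose end has degree 1,
only the start can have a neighbor off the path -/
lemma closure_aux {x v : V} (W : G.Walk x v) (hW : W.IsPath) (hv : G.degree v = 1)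
    (hdeg : ∀ a ∈ W.support, G.degree a ≤ 2) :
    ∀ a ∈ W.support, ∀ y, G.Adj a y → y ∈ W.support ∨ a = x := by
  induction W with
  | nil =>
    intro a ha y _
    right
    simpa using ha
  | @cons x b v h q ih =>
    intro a ha y hy
    rw [Walk.support_cons, List.mem_cons] at ha
    rcases ha with rfl | ha
    · right; rfl
    · have hq : q.IsPath := hW.of_cons
      have hdeg' : ∀ a ∈ q.support, G.degree a ≤ 2 := fun a ha =>
        hdeg a (by rw [Walk.support_cons]; exact List.mem_cons_of_mem _ ha)
      rcases ih hq hv hdeg' a ha y hy with hmem | rfl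
      · left
        rw [Walk.support_cons]
        exact List.mem_cons_of_mem _ hmem
      · -- a = b, the second vertex
        cases q with
        | nil =>
          -- b = v has degree 1, neighbors x and y
          have hx : x ∈ G.neighborFinset v := by
            rw [mem_neighborFinset]; exact h.symm
          have hyn : y ∈ G.neighborFinset v := by
            rw [mem_neighborFinset]; exact hy
          have hcard : (G.neighborFinset v).card ≤ 1 := by
            rw [← G.card_neighborFinset_eq_degree] at hv
            omega
          have := Finset.card_le_one.1 hcard y hyn x hx
          left
          rw [this, Walk.support_cons]
          exact List.mem_cons_self
        | @cons b b2 v h2 q2 =>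
          have hbdeg : G.degree a ≤ 2 := hdeg a (by
            rw [Walk.support_cons]
            exact List.mem_cons_of_mem _ (Walk.start_mem_support _))
          have hx : x ∈ G.neighborFinset a := by
            rw [mem_neighborFinset]; exact h.symm
          have hb2 : b2 ∈ G.neighborFinset a := by
            rw [mem_neighborFinset]; exact h2
          have hxb2 : x ≠ b2 := by
            rw [Walk.cons_isPath_iff] at hW
            intro hcon
            exact hW.2 (by rw [hcon, Walk.support_cons]
                           exact List.mem_cons_of_mem _ (Walk.start_mem_support _))
          have hsub : ({x, b2} : Finset V) ⊆ G.neighborFinset a := by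
            intro z hz
            rcases Finset.mem_insert.1 hz with rfl | hz
            · exact hx
            · rw [Finset.mem_singleton.1 hz]; exact hb2
          have h2card : ({x, b2} : Finset V).card = 2 := Finset.card_pair hxb2
          have heq : ({x, b2} : Finset V) = G.neighborFinset a := by
            apply Finset.eq_of_subset_of_card_le hsub
            rw [G.card_neighborFinset_eq_degree, h2card] at *
            omega
          have hyn : y ∈ ({x, b2} : Finset V) := by
            rw [heq, mem_neighborFinset]; exact hy
          rcases Finset.mem_insert.1 hyn with rfl | hy2
          · left; rw [Walk.support_cons]; exact List.mem_cons_self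
          · left
            rw [Finset.mem_singleton.1 hy2, Walk.support_cons, Walk.support_cons]
            exact List.mem_cons_of_mem _ (List.mem_cons_of_mem _ (Walk.start_mem_support _))

/-- a path between two distinct leaves, all of whose vertices have degree ≤ 2,
has support closed under adjacency -/
lemma leafpath_closed {u v : V} (W : G.Walk u v) (hW : W.IsPath)
    (hu : G.degree u = 1) (hv : G.degree v = 1) (huv : u ≠ v)
    (hdeg : ∀ a ∈ W.support, G.degree a ≤ 2) :
    ∀ a ∈ W.support, ∀ y, G.Adj a y → y ∈ W.support := by
  intro a ha y hy
  rcases closure_aux W hW hv hdeg a ha y hy with hmem | rfl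
  · exact hmem
  · cases W with
    | nil => exact absurd rfl huv
    | @cons x b v h q =>
      have hb : b ∈ G.neighborFinset a := by rw [mem_neighborFinset]; exact h
      have hyn : y ∈ G.neighborFinset a := by rw [mem_neighborFinset]; exact hy
      have hcard : (G.neighborFinset a).card ≤ 1 := by
        rw [← G.card_neighborFinset_eq_degree] at hu
        omega
      have := Finset.card_le_one.1 hcard y hyn b hb
      rw [this, Walk.support_cons]
      exact List.mem_cons_of_mem _ (Walk.start_mem_support _)

lemma mem_of_closed {C : Set V} (hC : ∀ a ∈ C, ∀ y, G.Adj a y → y ∈ C)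
    {u z : V} (W : G.Walk u z) (hu : u ∈ C) : z ∈ C := by
  induction W with
  | nil => exact hu
  | cons h q ih => exact ih (hC _ hu _ h)

include hT

/-- in a starlike tree, the path between two distinct leaves passes through the center -/
lemma center_mem_support {c u v : V} (hc3 : 3 ≤ G.degree c)
    (huniq : ∀ w, 3 ≤ G.degree w → w = c)
    (hu : G.degree u = 1) (hv : G.degree v = 1) (huv : u ≠ v) :
    c ∈ (pW hT.isConnected u v).support := by
  by_contra hc
  have hdeg : ∀ a ∈ (pW hT.isConnected u v).support, G.degree a ≤ 2 := by
    intro a ha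
    by_contra hcon
    push_neg at hcon
    rw [huniq a hcon] at ha
    exact hc ha
  have hclosed := leafpath_closed (pW hT.isConnected u v)
    (pW_isPath hT.isConnected u v) hu hv huv hdeg
  have : c ∈ (pW hT.isConnected u v).support :=
    mem_of_closed (C := {z | z ∈ (pW hT.isConnected u v).support}) hclosed
      (pW hT.isConnected u c) (Walk.start_mem_support _)
  exact hc this

/-- the vertex farthest from the center is a leaf -/
lemma ecc_leaf {c : V} (hc3 : 3 ≤ G.degree c) :
    ∀ v, G.dist c v ≤
      (Finset.univ.filter fun u => G.degree u = 1).sup (G.dist c) := by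
  intro v
  obtain ⟨w, -, hw⟩ := Finset.exists_max_image Finset.univ (G.dist c)
    ⟨c, Finset.mem_univ c⟩
  have hw' : ∀ b, G.dist c b ≤ G.dist c w := fun b => hw b (Finset.mem_univ b)
  -- the maximum distance is at least 1
  have hM1 : 1 ≤ G.dist c w := by
    have hpos : 0 < G.degree c := by omega
    obtain ⟨y, hy⟩ := Finset.card_pos.1 (by rwa [G.card_neighborFinset_eq_degree])
    rw [mem_neighborFinset] at hy
    have h1 : G.dist c y ≤ G.dist c w := hw' y
    have h2 : 0 < G.dist c y :=
      (hT.isConnected.pos_dist_of_ne (G.ne_of_adj hy))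
    omega
  have hwc : w ≠ c := by
    intro hcon
    rw [hcon, SimpleGraph.dist_self] at hM1
    omega
  -- every neighbor of w is the penultimate vertex of the path c → w
  have huniqnb : ∀ y, G.Adj w y →
      ((pW hT.isConnected c w).reverse.support.tail.head? = some y) := by
    intro y hy
    have hwny : w ∉ (pW hT.isConnected c y).support := by
      intro hmem
      have := dist_split hT hmem
      have h1 : G.dist c y ≤ G.dist c w := hw' y
      have h2 : G.dist w y = 0 := by omega
      have := (hT.isConnected.dist_eq_zero_iff).1 h2
      exact (G.ne_of_adj hy) this
    have hpath : ((pW hT.isConnected c y).concat hy.symm).IsPath := by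
      rw [Walk.isPath_def, Walk.support_concat]
      rw [List.nodup_append]
      refine ⟨(pW_isPath hT.isConnected c y).support_nodup, List.nodup_singleton _, ?_⟩
      intro a ha b hb
      rw [List.mem_singleton] at hb
      subst hb
      exact fun h => hwny (h ▸ ha)
    have heq : (pW hT.isConnected c y).concat hy.symm = pW hT.isConnected c w :=
      path_eq hT _ hpath
    rw [← heq, Walk.reverse_concat, Walk.support_cons, List.tail_cons,
      Walk.support_eq_cons]
    rfl
  -- w has at most one neighbor, and at least one, so it's a leaf
  have hdegw : G.degree w = 1 := by
    have hne : (G.neighborFinset w).Nonempty := by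
      have hreach : 0 < G.dist c w := by omega
      have : (pW hT.isConnected c w).length ≠ 0 := by
        rw [pW_length]; omega
      cases hWrev : (pW hT.isConnected c w).reverse with
      | nil =>
        exfalso
        apply this
        have := congrArg Walk.length hWrev
        rw [Walk.length_reverse] at this
        simpa using this
      | cons h q => exact ⟨_, by rw [mem_neighborFinset]; exact h⟩
    obtain ⟨y₀, hy₀⟩ := hne
    rw [mem_neighborFinset] at hy₀
    have hcard : G.neighborFinset w = {y₀} := by
      apply Finset.eq_singleton_iff_unique_mem.2
      refine ⟨by rw [mem_neighborFinset]; exact hy₀, ?_⟩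
      intro y hy
      rw [mem_neighborFinset] at hy
      have h1 := huniqnb y hy
      have h2 := huniqnb y₀ hy₀
      rw [h1] at h2
      exact (Option.some_inj.1 h2)
    rw [← G.card_neighborFinset_eq_degree, hcard]
    simp
  calc G.dist c v ≤ G.dist c w := hw' v
    _ ≤ _ := Finset.le_sup (by simp [hdegw])

lemma starlike_diam {c : V} (hc3 : 3 ≤ G.degree c)
    (huniq : ∀ w, 3 ≤ G.degree w → w = c) {p : ℕ} (hp2 : 2 ≤ p)
    (hcount : p ≤ (Finset.univ.filter fun v => G.degree v = 1 ∧
      G.dist c v = (Finset.univ.filter fun u => G.degree u = 1).sup (G.dist c)).card) :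
    steinerDiam G p =
      p * (Finset.univ.filter fun u => G.degree u = 1).sup (G.dist c) := by
  classical
  set D := (Finset.univ.filter fun u => G.degree u = 1).sup (G.dist c) with hD
  apply le_antisymm
  · -- upper bound
    apply Finset.sup_le
    intro S hS
    have hcard : S.card = p := (Finset.mem_filter.1 hS).2
    have hne : S.Nonempty := Finset.card_pos.1 (by omega)
    calc steinerDist G S ≤ (U0F hT.isConnected c S).card := sd_le_card_U0F hT c hne
      _ ≤ ∑ u ∈ S, (pW hT.isConnected c u).edges.toFinset.card :=
          Finset.card_biUnion_le
      _ ≤ ∑ u ∈ S, D := by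
          apply Finset.sum_le_sum
          intro u _
          calc (pW hT.isConnected c u).edges.toFinset.card
              ≤ (pW hT.isConnected c u).edges.length := List.toFinset_card_le _
            _ = (pW hT.isConnected c u).length := Walk.length_edges _
            _ = G.dist c u := pW_length _ _ _
            _ ≤ D := ecc_leaf hT hc3 u
      _ = p * D := by rw [Finset.sum_const, hcard, smul_eq_mul]
  · -- lower bound
    obtain ⟨S₀, hS₀sub, hS₀card⟩ := Finset.exists_subset_card_eq hcount
    have hleaf : ∀ v ∈ S₀, G.degree v = 1 ∧ G.dist c v = D := by
      intro v hv
      have := hS₀sub hv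
      rw [Finset.mem_filter] at this
      exact this.2
    set F : V → Finset (Sym2 V) := fun v => (pW hT.isConnected c v).edges.toFinset
      with hF
    have hdisjF : ∀ v ∈ S₀, ∀ w ∈ S₀, v ≠ w → Disjoint (F v) (F w) := by
      intro v hv w hw hvw
      rw [Finset.disjoint_left]
      intro e he1 he2
      have hnd : (pW hT.isConnected v w).edges.Nodup :=
        (pW_isPath hT.isConnected v w).isTrail.edges_nodup
      have hcmem := center_mem_support hT hc3 huniq (hleaf v hv).1 (hleaf w hw).1 hvw
      rw [pW_split hT hcmem, Walk.edges_append] at hnd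
      have hdisj := List.disjoint_of_nodup_append hnd
      have he1' : e ∈ (pW hT.isConnected v c).edges :=
        (mem_edges_symm hT c v).2 (List.mem_toFinset.1 he1)
      exact hdisj he1' (List.mem_toFinset.1 he2)
    have hFsub : S₀.biUnion F ⊆ UF hT.isConnected S₀ := by
      intro e he
      rw [Finset.mem_biUnion] at he
      obtain ⟨v, hv, he⟩ := he
      obtain ⟨u, hu, huv⟩ := Finset.exists_mem_ne (s := S₀) (by omega) v
      have hcmem := center_mem_support hT hc3 huniq (hleaf u hu).1 (hleaf v hv).1 huv
      refine mem_UF.2 ⟨u, hu, v, hv, ?_⟩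
      rw [pW_split hT hcmem, Walk.edges_append, List.mem_append]
      exact Or.inr (List.mem_toFinset.1 he)
    have hcardF : (S₀.biUnion F).card = p * D := by
      rw [Finset.card_biUnion hdisjF, ← hS₀card]
      apply Finset.sum_const_nat
      intro v hv
      rw [hF]
      calc (pW hT.isConnected c v).edges.toFinset.card
          = (pW hT.isConnected c v).edges.length :=
            List.toFinset_card_of_nodup
              ((pW_isPath hT.isConnected c v).isTrail.edges_nodup)
        _ = (pW hT.isConnected c v).length := Walk.length_edges _
        _ = G.dist c v := pW_length _ _ _
        _ = D := (hleaf v hv).2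
    have hS₀ne : S₀.Nonempty := Finset.card_pos.1 (by omega)
    have hlow : p * D ≤ steinerDist G S₀ := by
      rw [sd_eq_card_UF hT hS₀ne, ← hcardF]
      · exact Finset.card_le_card hFsub
    refine le_trans hlow (Finset.le_sup ?_)
    simp [hS₀card]

end StmtAux

theorem stmt15 {V : Type*} [Fintype V] [DecidableEq V] (G : SimpleGraph V)
    [DecidableRel G.Adj] (hT : G.IsTree) (n k k' : ℕ) (hn : Fintype.card V = n)
    (hk : 3 ≤ k) (hkn : k ≤ n) (hk' : 1 ≤ k') (hkk' : k' + 2 ≤ k) :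
    ((steinerDiam G k : ℝ) ≤ (k / ((k : ℝ) - k')) * steinerDiam G (k - k')) ∧
    (∀ c : V, 3 ≤ G.degree c → (∀ w, 3 ≤ G.degree w → w = c) →
      k ≤ (Finset.univ.filter fun v => G.degree v = 1 ∧
            G.dist c v =
              Finset.sup (Finset.univ.filter fun u => G.degree u = 1) (G.dist c)).card →
      (steinerDiam G k : ℝ) = (k / ((k : ℝ) - k')) * steinerDiam G (k - k')) := by
  classical
  have hcardV : k ≤ Fintype.card V := by omega
  have hkk : k' ≤ k := by omega
  have hcast : ((k - k' : ℕ) : ℝ) = (k : ℝ) - k' := by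
    push_cast [hkk]
    ring
  have hpos : (0 : ℝ) < (k : ℝ) - k' := by
    have : (k' : ℝ) < k := by exact_mod_cast (by omega : k' < k)
    linarith
  constructor
  · -- the inequality
    have htel := StmtAux.telescope (G := G) hT hcardV k' (by omega)
    rw [div_mul_eq_mul_div, le_div_iff₀ hpos, ← hcast]
    have : (steinerDiam G k : ℝ) * ((k - k' : ℕ) : ℝ)
        = (((k - k') * steinerDiam G k : ℕ) : ℝ) := by push_cast; ring
    rw [this]
    have : ((k : ℝ)) * (steinerDiam G (k - k') : ℝ)
        = ((k * steinerDiam G (k - k') : ℕ) : ℝ) := by push_cast; ring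
    rw [this]
    exact_mod_cast htel
  · -- the equality for starlike trees
    intro c hc3 huniq hcount
    have h1 : steinerDiam G k =
        k * (Finset.univ.filter fun u => G.degree u = 1).sup (G.dist c) :=
      StmtAux.starlike_diam hT hc3 huniq (by omega) hcount
    have h2 : steinerDiam G (k - k') =
        (k - k') * (Finset.univ.filter fun u => G.degree u = 1).sup (G.dist c) :=
      StmtAux.starlike_diam hT hc3 huniq (by omega) (le_trans (by omega) hcount)
    rw [h1, h2]
    push_cast [hkk]
    field_simp
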